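/- Let n ≥ 2 and m be natural numbers. Suppose for each i ∈ {1,…,m} we are given indices k_i < ℓ_i in {0,…,n−1} and a 2×2 complex unitary matrix A_i, and let Ã_i denote the n×n embedding of A_i at positions (k_i, ℓ_i). If the product Ã_m · Ã_{m−1} ⋯ Ã_1 equals the normalized Fourier transform matrix F of order n, then m ≥ (1/2)·n·log₂ n. -/

import Mathlib

open Matrix

/-- The `n×n` embedding of a `2×2` matrix `A` at positions `(k, l)`:
`Ã(k,k)=A(1,1)`, `Ã(k,l)=A(1,2)`, `Ã(l,k)=A(2,1)`, `Ã(l,l)=A(2,2)`,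
`Ã(j,j)=1` for `j ∉ {k,l}`, and all other entries `0`. -/
def embedAt {n : ℕ} (k l : Fin n) (A : Matrix (Fin 2) (Fin 2) ℂ) :
    Matrix (Fin n) (Fin n) ℂ := fun p q =>
  if p = k ∧ q = k then A 0 0
  else if p = k ∧ q = l then A 0 1
  else if p = l ∧ q = k then A 1 0
  else if p = l ∧ q = l then A 1 1
  else if p = q then 1
  else 0

/-- The normalized Fourier transform matrix of order `n`. -/
noncomputable def fourierMatrix (n : ℕ) : Matrix (Fin n) (Fin n) ℂ :=
  fun p q => (1 / Real.sqrt n : ℝ) *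
    Complex.exp (2 * Real.pi * Complex.I * (p : ℕ) * (q : ℕ) / (n : ℕ))

lemma embed_mul_apply {n : ℕ} {k l : Fin n} (hkl : k ≠ l) (A : Matrix (Fin 2) (Fin 2) ℂ)
    (M : Matrix (Fin n) (Fin n) ℂ) (p q : Fin n) :
    (embedAt k l A * M) p q =
      if p = k then A 0 0 * M k q + A 0 1 * M l q
      else if p = l then A 1 0 * M k q + A 1 1 * M l q
      else M p q := by
  rw [Matrix.mul_apply]
  by_cases hpk : p = k
  · rw [if_pos hpk]
    have h : ∀ r : Fin n, embedAt k l A p r * M r q =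
        (if r = k then A 0 0 * M k q else 0) + (if r = l then A 0 1 * M l q else 0) := by
      intro r
      by_cases h1 : r = k
      · simp [embedAt, hpk, h1, hkl, Ne.symm hkl]
      · by_cases h2 : r = l
        · simp [embedAt, hpk, h1, h2, hkl, Ne.symm hkl]
        · simp [embedAt, hpk, h1, h2, hkl, Ne.symm h1, Ne.symm h2]
    rw [Finset.sum_congr rfl fun r _ => h r, Finset.sum_add_distrib]
    simp
  · by_cases hpl : p = l
    · rw [if_neg hpk, if_pos hpl]
      have h : ∀ r : Fin n, embedAt k l A p r * M r q =
          (if r = k then A 1 0 * M k q else 0) + (if r = l then A 1 1 * M l q else 0) := by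
        intro r
        by_cases h1 : r = k
        · simp [embedAt, hpl, h1, hkl, Ne.symm hkl]
        · by_cases h2 : r = l
          · simp [embedAt, hpl, h1, h2, hkl, Ne.symm hkl]
          · simp [embedAt, hpl, h1, h2, hkl, Ne.symm h1, Ne.symm h2, Ne.symm hkl]
      rw [Finset.sum_congr rfl fun r _ => h r, Finset.sum_add_distrib]
      simp
    · rw [if_neg hpk, if_neg hpl]
      have h : ∀ r : Fin n, embedAt k l A p r * M r q =
          if r = p then M p q else 0 := by
        intro r
        by_cases h1 : r = p
        · simp [embedAt, hpk, hpl, h1]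
        · simp [embedAt, hpk, hpl, h1, Ne.symm h1]
      rw [Finset.sum_congr rfl fun r _ => h r]
      simp


lemma embed_unitary {n : ℕ} {k l : Fin n} (hkl : k ≠ l) {A : Matrix (Fin 2) (Fin 2) ℂ}
    (hA : Aᴴ * A = 1) : embedAt k l A * (embedAt k l A)ᴴ = 1 := by
  have hA' : A * Aᴴ = 1 := mul_eq_one_comm.mp hA
  have e : ∀ i j : Fin 2, A i 0 * (starRingEnd ℂ) (A j 0) + A i 1 * (starRingEnd ℂ) (A j 1)
      = if i = j then 1 else 0 := by
    intro i j
    have := congrFun (congrFun hA' i) j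
    rw [Matrix.mul_apply, Fin.sum_univ_two] at this
    simpa [Matrix.conjTranspose_apply, Matrix.one_apply] using this
  have e00 := e 0 0; rw [if_pos rfl] at e00
  have e11 := e 1 1; rw [if_pos rfl] at e11
  have e01 := e 0 1; rw [if_neg (by decide)] at e01
  have e10 := e 1 0; rw [if_neg (by decide)] at e10
  ext p q
  rw [embed_mul_apply hkl, Matrix.one_apply]
  simp only [Matrix.conjTranspose_apply]
  by_cases hpk : p = k
  · rw [if_pos hpk]
    by_cases hqk : q = k
    · simp [embedAt, hpk, hqk, hkl, Ne.symm hkl, e00]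
    · by_cases hql : q = l
      · simp [embedAt, hpk, hqk, hql, hkl, Ne.symm hkl, e01]
      · simp [embedAt, hpk, hqk, hql, hkl, Ne.symm hkl, Ne.symm hqk, Ne.symm hql]
  · rw [if_neg hpk]
    by_cases hpl : p = l
    · rw [if_pos hpl]
      by_cases hqk : q = k
      · simp [embedAt, hpl, hqk, hkl, Ne.symm hkl, e10]
      · by_cases hql : q = l
        · simp [embedAt, hpl, hqk, hql, hkl, Ne.symm hkl, e11]
        · simp [embedAt, hpl, hqk, hql, hkl, Ne.symm hkl, Ne.symm hqk, Ne.symm hql]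
    · rw [if_neg hpl]
      by_cases hqp : q = p
      · simp [embedAt, hpk, hpl, hqp]
      · simp [embedAt, hpk, hpl, hqp, Ne.symm hqp]

lemma binEnt (a b : ℝ) (ha : 0 ≤ a) (hb : 0 ≤ b) :
    Real.negMulLog a + Real.negMulLog b
      ≤ Real.negMulLog (a + b) + (a + b) * Real.log 2 := by
  rcases eq_or_lt_of_le (add_nonneg ha hb) with hc | hc
  · have ha0 : a = 0 := by linarith [ha, hb]
    have hb0 : b = 0 := by linarith
    simp [ha0, hb0]
  · have h := Real.concaveOn_negMulLog.2 (Set.mem_Ici.mpr ha) (Set.mem_Ici.mpr hb)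
      (by norm_num : (0:ℝ) ≤ 1/2) (by norm_num : (0:ℝ) ≤ 1/2) (by norm_num)
    have hhalf : Real.negMulLog ((1/2 : ℝ) • a + (1/2 : ℝ) • b)
        = (1/2) * (Real.negMulLog (a+b) + (a+b) * Real.log 2) := by
      have h1 : (1/2 : ℝ) • a + (1/2 : ℝ) • b = (a+b)/2 := by
        simp [smul_eq_mul]; ring
      rw [h1]
      rw [Real.negMulLog, Real.negMulLog, Real.log_div (by linarith) (by norm_num)]
      ring
    rw [hhalf] at h
    simp only [smul_eq_mul] at h
    linarith

lemma subaddEnt (x y : ℝ) (hx : 0 ≤ x) (hy : 0 ≤ y) :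
    Real.negMulLog (x + y) ≤ Real.negMulLog x + Real.negMulLog y := by
  simp only [Real.negMulLog, neg_mul]
  have h1 : x * Real.log x ≤ x * Real.log (x + y) := by
    rcases eq_or_lt_of_le hx with h | h
    · simp [← h]
    · exact mul_le_mul_of_nonneg_left (Real.log_le_log h (by linarith)) hx
  have h2 : y * Real.log y ≤ y * Real.log (x + y) := by
    rcases eq_or_lt_of_le hy with h | h
    · simp [← h]
    · exact mul_le_mul_of_nonneg_left (Real.log_le_log h (by linarith)) hy
  nlinarith [h1, h2]

lemma mass_preserve {A : Matrix (Fin 2) (Fin 2) ℂ} (hA : Aᴴ * A = 1) (u v : ℂ) :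
    Complex.normSq (A 0 0 * u + A 0 1 * v) + Complex.normSq (A 1 0 * u + A 1 1 * v)
      = Complex.normSq u + Complex.normSq v := by
  have e : ∀ i j : Fin 2, (starRingEnd ℂ) (A 0 i) * A 0 j + (starRingEnd ℂ) (A 1 i) * A 1 j
      = if i = j then 1 else 0 := by
    intro i j
    have := congrFun (congrFun hA i) j
    rw [Matrix.mul_apply, Fin.sum_univ_two] at this
    simpa [Matrix.conjTranspose_apply, Matrix.one_apply] using this
  have e00 := e 0 0
  have e11 := e 1 1
  have e01 := e 0 1
  rw [if_pos rfl] at e00 e11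
  rw [if_neg (by decide)] at e01
  have e10 : (starRingEnd ℂ) (A 0 1) * A 0 0 + (starRingEnd ℂ) (A 1 1) * A 1 0 = 0 := by
    have := congrArg (starRingEnd ℂ) e01
    simpa [mul_comm] using this
  have key : (A 0 0 * u + A 0 1 * v) * (starRingEnd ℂ) (A 0 0 * u + A 0 1 * v)
      + (A 1 0 * u + A 1 1 * v) * (starRingEnd ℂ) (A 1 0 * u + A 1 1 * v)
      = u * (starRingEnd ℂ) u + v * (starRingEnd ℂ) v := by
    simp only [map_add, _root_.map_mul]
    linear_combination (u * (starRingEnd ℂ) u) * e00 + (v * (starRingEnd ℂ) v) * e11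
      + (v * (starRingEnd ℂ) u) * e01 + (u * (starRingEnd ℂ) v) * e10
  rw [Complex.mul_conj, Complex.mul_conj, Complex.mul_conj, Complex.mul_conj] at key
  exact_mod_cast key


noncomputable def matEnt {n : ℕ} (M : Matrix (Fin n) (Fin n) ℂ) : ℝ :=
  ∑ p, ∑ q, Real.negMulLog (Complex.normSq (M p q))

lemma ent_step {n : ℕ} {k l : Fin n} (hkl : k ≠ l) {A : Matrix (Fin 2) (Fin 2) ℂ}
    (hA : Aᴴ * A = 1) {M : Matrix (Fin n) (Fin n) ℂ} (hM : M * Mᴴ = 1) :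
    matEnt (embedAt k l A * M) ≤ matEnt M + 2 * Real.log 2 := by
  have hNk : ∀ q, (embedAt k l A * M) k q = A 0 0 * M k q + A 0 1 * M l q := fun q => by
    rw [embed_mul_apply hkl]; simp
  have hNl : ∀ q, (embedAt k l A * M) l q = A 1 0 * M k q + A 1 1 * M l q := fun q => by
    rw [embed_mul_apply hkl]; simp [Ne.symm hkl]
  have hNo : ∀ p q, p ≠ k → p ≠ l → (embedAt k l A * M) p q = M p q := fun p q h1 h2 => by
    rw [embed_mul_apply hkl]; simp [h1, h2]
  have rowNorm : ∀ j : Fin n, ∑ q, Complex.normSq (M j q) = 1 := by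
    intro j
    have h := congrFun (congrFun hM j) j
    rw [Matrix.mul_apply] at h
    simp only [Matrix.conjTranspose_apply, Complex.star_def, Complex.mul_conj, Matrix.one_apply_eq] at h
    exact_mod_cast h
  set f : Fin n → ℝ :=
    fun p => ∑ q, Real.negMulLog (Complex.normSq ((embedAt k l A * M) p q)) with hf
  set g : Fin n → ℝ := fun p => ∑ q, Real.negMulLog (Complex.normSq (M p q)) with hg
  have split : ∀ h : Fin n → ℝ,
      ∑ p, h p = h k + (h l + ∑ p ∈ (Finset.univ.erase k).erase l, h p) := by
    intro h
    rw [← Finset.add_sum_erase _ h (Finset.mem_univ k)]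
    congr 1
    rw [← Finset.add_sum_erase _ h (Finset.mem_erase.mpr ⟨Ne.symm hkl, Finset.mem_univ l⟩)]
  have hrest : ∑ p ∈ (Finset.univ.erase k).erase l, f p
      = ∑ p ∈ (Finset.univ.erase k).erase l, g p := by
    refine Finset.sum_congr rfl fun p hp => ?_
    rw [Finset.mem_erase, Finset.mem_erase] at hp
    exact Finset.sum_congr rfl fun q _ => by rw [hNo p q hp.2.1 hp.1]
  have pair : f k + f l ≤ g k + g l + 2 * Real.log 2 := by
    have perq : ∀ q, Real.negMulLog (Complex.normSq ((embedAt k l A * M) k q))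
        + Real.negMulLog (Complex.normSq ((embedAt k l A * M) l q))
        ≤ Real.negMulLog (Complex.normSq (M k q)) + Real.negMulLog (Complex.normSq (M l q))
          + (Complex.normSq (M k q) + Complex.normSq (M l q)) * Real.log 2 := by
      intro q
      rw [hNk q, hNl q]
      have hmass := mass_preserve hA (M k q) (M l q)
      have h1 := binEnt (Complex.normSq (A 0 0 * M k q + A 0 1 * M l q))
        (Complex.normSq (A 1 0 * M k q + A 1 1 * M l q))
        (Complex.normSq_nonneg _) (Complex.normSq_nonneg _)
      rw [hmass] at h1
      have h2 := subaddEnt (Complex.normSq (M k q)) (Complex.normSq (M l q))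
        (Complex.normSq_nonneg _) (Complex.normSq_nonneg _)
      nlinarith [Real.log_pos (by norm_num : (1:ℝ) < 2), h1, h2,
        Complex.normSq_nonneg (M k q), Complex.normSq_nonneg (M l q)]
    calc f k + f l
        = ∑ q, (Real.negMulLog (Complex.normSq ((embedAt k l A * M) k q))
          + Real.negMulLog (Complex.normSq ((embedAt k l A * M) l q))) :=
          Finset.sum_add_distrib.symm
      _ ≤ ∑ q, (Real.negMulLog (Complex.normSq (M k q)) + Real.negMulLog (Complex.normSq (M l q))
          + (Complex.normSq (M k q) + Complex.normSq (M l q)) * Real.log 2) :=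
          Finset.sum_le_sum fun q _ => perq q
      _ = g k + g l + (∑ q, (Complex.normSq (M k q) + Complex.normSq (M l q))) * Real.log 2 := by
          rw [Finset.sum_add_distrib, Finset.sum_add_distrib, Finset.sum_mul]
      _ = g k + g l + 2 * Real.log 2 := by
          rw [Finset.sum_add_distrib, rowNorm k, rowNorm l]; norm_num
  have e1 : matEnt (embedAt k l A * M) = ∑ p, f p := rfl
  have e2 : matEnt M = ∑ p, g p := rfl
  rw [e1, e2, split f, split g]
  linarith [hrest, pair]

lemma matEnt_one {n : ℕ} : matEnt (1 : Matrix (Fin n) (Fin n) ℂ) = 0 := by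
  unfold matEnt
  refine Finset.sum_eq_zero fun p _ => Finset.sum_eq_zero fun q _ => ?_
  by_cases h : p = q <;> simp [Matrix.one_apply, h]

lemma prod_ent {n : ℕ} (L : List (Matrix (Fin n) (Fin n) ℂ))
    (hL : ∀ E ∈ L, ∃ (k l : Fin n) (A : Matrix (Fin 2) (Fin 2) ℂ),
      k ≠ l ∧ Aᴴ * A = 1 ∧ E = embedAt k l A) :
    L.prod * (L.prod)ᴴ = 1 ∧ matEnt L.prod ≤ 2 * L.length * Real.log 2 := by
  induction L with
  | nil => simp [matEnt_one]
  | cons E L ih =>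
    obtain ⟨k, l, A, hkl, hA, hE⟩ := hL E List.mem_cons_self
    obtain ⟨ih1, ih2⟩ := ih fun E' hE' => hL E' (List.mem_cons_of_mem _ hE')
    rw [List.prod_cons]
    constructor
    · rw [Matrix.conjTranspose_mul, show E * L.prod * (L.prodᴴ * Eᴴ)
        = E * (L.prod * L.prodᴴ) * Eᴴ by noncomm_ring, ih1, mul_one, hE]
      exact embed_unitary hkl hA
    · rw [hE]
      have := ent_step hkl hA ih1
      have hlog : (0:ℝ) ≤ Real.log 2 := Real.log_nonneg (by norm_num)
      simp only [List.length_cons]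
      push_cast
      nlinarith [this, ih2]

lemma ent_fourier {n : ℕ} (hn : 1 ≤ n) : matEnt (fourierMatrix n) = n * Real.log n := by
  have hn0 : (0:ℝ) < n := by exact_mod_cast hn
  have hentry : ∀ p q : Fin n, Complex.normSq (fourierMatrix n p q) = 1 / n := by
    intro p q
    unfold fourierMatrix
    have harg : 2 * Real.pi * Complex.I * (p:ℕ) * (q:ℕ) / (n:ℕ)
        = ((2 * Real.pi * (p:ℕ) * (q:ℕ) / (n:ℕ) : ℝ) : ℂ) * Complex.I := by
      push_cast; ring
    rw [harg, Complex.normSq_mul]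
    have habs : Complex.normSq (Complex.exp (((2 * Real.pi * (p:ℕ) * (q:ℕ) / (n:ℕ) : ℝ) : ℂ) * Complex.I)) = 1 := by
      rw [Complex.normSq_eq_norm_sq, Complex.norm_exp_ofReal_mul_I]
      norm_num
    rw [habs, mul_one, Complex.normSq_ofReal, div_mul_div_comm, one_mul,
      Real.mul_self_sqrt (le_of_lt hn0)]
  unfold matEnt
  have : ∀ p : Fin n, ∑ q : Fin n, Real.negMulLog (Complex.normSq (fourierMatrix n p q))
      = n * Real.negMulLog (1/n) := by
    intro p
    rw [Finset.sum_congr rfl fun q _ => by rw [hentry p q]]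
    simp [Finset.card_univ]
  rw [Finset.sum_congr rfl fun p _ => this p]
  simp only [Finset.sum_const, Finset.card_univ, Fintype.card_fin, nsmul_eq_mul]
  rw [Real.negMulLog, Real.log_div one_ne_zero (ne_of_gt hn0), Real.log_one]
  field_simp
  ring

theorem fourier_lower_bound {n m : ℕ} (hn : 2 ≤ n)
    (k l : Fin m → Fin n) (hkl : ∀ i, k i < l i)
    (A : Fin m → Matrix (Fin 2) (Fin 2) ℂ) (hA : ∀ i, (A i)ᴴ * A i = 1)
    (hprod : (List.ofFn fun i : Fin m => embedAt (k i) (l i) (A i)).reverse.prod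
      = fourierMatrix n) :
    (m : ℝ) ≥ (1 / 2) * n * Real.logb 2 n := by
  set L := (List.ofFn fun i : Fin m => embedAt (k i) (l i) (A i)).reverse with hL
  have hmem : ∀ E ∈ L, ∃ (k' l' : Fin n) (A' : Matrix (Fin 2) (Fin 2) ℂ),
      k' ≠ l' ∧ A'ᴴ * A' = 1 ∧ E = embedAt k' l' A' := by
    intro E hE
    rw [hL, List.mem_reverse, List.mem_ofFn] at hE
    obtain ⟨i, hi⟩ := hE
    exact ⟨k i, l i, A i, ne_of_lt (hkl i), hA i, hi.symm⟩
  have hlen : L.length = m := by simp [hL]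
  have h := (prod_ent L hmem).2
  rw [hprod, hlen, ent_fourier (by omega)] at h
  have hlog2 : (0:ℝ) < Real.log 2 := Real.log_pos (by norm_num)
  rw [ge_iff_le, Real.logb]
  rw [show (1/2 : ℝ) * n * (Real.log n / Real.log 2) = (n * Real.log n) / (2 * Real.log 2) by
    field_simp]
  rw [div_le_iff₀ (by positivity)]
  linarith
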